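/- Let k be a field. Given a pushout square in ChainComplex (ModuleCat k) ℤ with f : A ⟶ B a quasi-isomorphism and g : A ⟶ C a monomorphism, the cobase change pushout.inr : C ⟶ B ⊔_A C of f along g is a quasi-isomorphism. In other words, quasi-isomorphisms of chain complexes of k-vector spaces are stable under pushout along monomorphisms. -/

import Mathlib

open CategoryTheory CategoryTheory.Limits

section Aux

variable {𝒞 𝒟 : Type*} [Category 𝒞] [Category 𝒟] [Preadditive 𝒞] [Preadditive 𝒟]
  [HasBinaryBiproducts 𝒞] [HasBinaryBiproducts 𝒟]

lemma isIso_map_biprod_map (F : 𝒞 ⥤ 𝒟) [F.Additive] {X Y X' Y' : 𝒞}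
    (f : X ⟶ Y) (g : X' ⟶ Y') [IsIso (F.map f)] [IsIso (F.map g)] :
    IsIso (F.map (biprod.map f g)) := by
  refine ⟨⟨F.map biprod.fst ≫ inv (F.map f) ≫ F.map biprod.inl +
      F.map biprod.snd ≫ inv (F.map g) ≫ F.map biprod.inr, ?_, ?_⟩⟩
  · simp only [Preadditive.comp_add, ← Functor.map_comp_assoc, biprod.map_fst, biprod.map_snd]
    rw [Functor.map_comp, Functor.map_comp, Category.assoc, Category.assoc,
      IsIso.hom_inv_id_assoc, IsIso.hom_inv_id_assoc, ← Functor.map_comp, ← Functor.map_comp,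
      ← Functor.map_add, biprod.total, CategoryTheory.Functor.map_id]
  · simp only [Preadditive.add_comp, Category.assoc, ← Functor.map_comp, biprod.inl_map,
      biprod.inr_map]
    rw [Functor.map_comp, Functor.map_comp, IsIso.inv_hom_id_assoc, IsIso.inv_hom_id_assoc,
      ← Functor.map_comp, ← Functor.map_comp, ← Functor.map_add, biprod.total, CategoryTheory.Functor.map_id]

end Aux

/-- Quasi-isomorphisms of chain complexes of `k`-vector spaces are stable under
pushout along monomorphisms. -/
theorem quasiIso_pushout_inr_of_mono (k : Type*) [Field k]
    {A B C : ChainComplex (ModuleCat k) ℤ}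
    (f : A ⟶ B) (g : A ⟶ C) [QuasiIso f] [Mono g] :
    QuasiIso (pushout.inr f g) := by
  have hneg : IsIso (-𝟙 C) := ⟨-𝟙 C, by simp, by simp⟩
  have hmonoNeg : Mono (-g) := by
    have : -g = g ≫ (-𝟙 C) := by simp
    rw [this]; exact mono_comp _ _
  -- the split short exact sequence 0 → A → A ⊞ C → C → 0
  let S₁ : ShortComplex (ChainComplex (ModuleCat k) ℤ) :=
    ShortComplex.mk (biprod.lift (𝟙 A) (-g)) (biprod.desc g (𝟙 C)) (by simp)
  -- the short exact sequence 0 → A → B ⊞ C → pushout f g → 0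
  let S₂ : ShortComplex (ChainComplex (ModuleCat k) ℤ) :=
    ShortComplex.mk (biprod.lift f (-g))
      (biprod.desc (pushout.inl f g) (pushout.inr f g))
      (by rw [biprod.lift_desc, Preadditive.neg_comp, pushout.condition, add_neg_cancel])
  have hS₁ : S₁.ShortExact := by
    refine ShortComplex.Splitting.shortExact
      { r := biprod.fst, s := biprod.inr, f_r := by simp [S₁], s_g := by simp [S₁], id := ?_ }
    apply biprod.hom_ext <;> apply biprod.hom_ext' <;> simp [S₁]
  have hS₂ : S₂.ShortExact := by
    have hcolim := Abelian.BiproductToPushoutIsCokernel.isColimitBiproductToPushout f g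
    have hmono : Mono S₂.f := by
      have : Mono (S₂.f ≫ biprod.snd) := by simpa [S₂] using hmonoNeg
      exact mono_of_mono S₂.f biprod.snd
    have hepi : Epi S₂.g := ⟨fun u v h => by
      apply pushout.hom_ext
      · simpa [S₂] using biprod.inl ≫= h
      · simpa [S₂] using biprod.inr ≫= h⟩
    exact { exact := S₂.exact_of_g_is_cokernel hcolim, mono_f := hmono, epi_g := hepi }
  -- the morphism of short exact sequences
  let φ : S₁ ⟶ S₂ :=
    { τ₁ := 𝟙 A
      τ₂ := biprod.map f (𝟙 C)
      τ₃ := pushout.inr f g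
      comm₁₂ := by apply biprod.hom_ext <;> simp [S₁, S₂]
      comm₂₃ := by apply biprod.hom_ext' <;> simp [S₁, S₂, pushout.condition] }
  have h₁ : QuasiIso φ.τ₁ := by dsimp [φ]; infer_instance
  have h₂ : QuasiIso φ.τ₂ := by
    rw [quasiIso_iff]
    intro i
    rw [quasiIsoAt_iff_isIso_homologyMap]
    have hf : IsIso ((HomologicalComplex.homologyFunctor (ModuleCat k)
        (ComplexShape.down ℤ) i).map f) := by
      have := (quasiIsoAt_iff_isIso_homologyMap f i).1 (inferInstance : QuasiIsoAt f i)
      exact this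
    have hg : IsIso ((HomologicalComplex.homologyFunctor (ModuleCat k)
        (ComplexShape.down ℤ) i).map (𝟙 C)) := by
      rw [CategoryTheory.Functor.map_id]; infer_instance
    exact isIso_map_biprod_map
      (HomologicalComplex.homologyFunctor (ModuleCat k) (ComplexShape.down ℤ) i) f (𝟙 C)
  exact HomologicalComplex.HomologySequence.quasiIso_τ₃ φ hS₁ hS₂ h₁ h₂
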